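/- Let f : ℕ → ℝ⁺ satisfy Δf(n) > 0 and Δ²f(n) ≥ 0 for all n (where Δf(n) = f(n+1) - f(n)), and suppose sup_{x>0} N(x)²/x = ∞, where N(x) = |{n ∈ ℕ : f(n) ≤ x}|. Then for every integer k > 0 there exists n₀ > 0 such that ⌊Δf(n)⌋ is constant for n₀ ≤ n ≤ n₀ + k. -/

import Mathlib

theorem stmt_9 (f : ℕ → ℝ) (hfpos : ∀ n, 0 < f n)
    (hΔ : ∀ n, f n < f (n + 1))
    (hΔ2 : ∀ n, f (n + 1) - f n ≤ f (n + 2) - f (n + 1))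
    (hsup : ∀ M : ℝ, ∃ x : ℝ, 0 < x ∧
      M < (Set.ncard {n : ℕ | f n ≤ x} : ℝ) ^ 2 / x) :
    ∀ k : ℕ, 0 < k → ∃ n₀ : ℕ, 0 < n₀ ∧ ∃ c : ℤ,
      ∀ n, n₀ ≤ n → n ≤ n₀ + k → ⌊f (n + 1) - f n⌋ = c := by
  intro k hk
  by_contra hcon
  push_neg at hcon
  set g : ℕ → ℤ := fun n => ⌊f (n + 1) - f n⌋ with hg
  have hmono : StrictMono f := strictMono_nat_of_lt_succ hΔ
  have hgmono : Monotone g := monotone_nat_of_le_succ fun n => Int.floor_mono (hΔ2 n)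
  -- key step: g increases on every window of length k
  have H : ∀ n₀ : ℕ, 0 < n₀ → g n₀ + 1 ≤ g (n₀ + k) := by
    intro n₀ hn₀
    obtain ⟨n, hn1, hn2, hn3⟩ := hcon n₀ hn₀ (g n₀)
    have h1 : g n₀ ≤ g n := hgmono hn1
    have h2 : g n ≤ g (n₀ + k) := hgmono hn2
    have : g n₀ < g n := lt_of_le_of_ne h1 (Ne.symm hn3)
    omega
  have key1 : ∀ m : ℕ, (m : ℤ) ≤ g (1 + m * k) := by
    intro m
    induction m with
    | zero =>
      simp only [Nat.cast_zero, zero_mul, add_zero]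
      have : (0:ℝ) ≤ f 2 - f 1 := by linarith [hΔ 1]
      exact Int.le_floor.mpr (by exact_mod_cast this)
    | succ m ih =>
      have h1 : g (1 + m * k) + 1 ≤ g (1 + m * k + k) := H _ (by positivity)
      have h2 : 1 + (m + 1) * k = 1 + m * k + k := by ring
      rw [h2]; push_cast; omega
  have key2 : ∀ m i : ℕ, f (1 + m * k) + (i : ℝ) * (m : ℝ) ≤ f (1 + m * k + i) := by
    intro m i
    induction i with
    | zero => simp
    | succ i ih =>
      have h1 : (m : ℤ) ≤ g (1 + m * k + i) := le_trans (key1 m) (hgmono (Nat.le_add_right _ _))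
      have h2 : ((g (1 + m * k + i) : ℤ) : ℝ) ≤ f (1 + m * k + i + 1) - f (1 + m * k + i) :=
        Int.floor_le _
      have h3 : (m : ℝ) ≤ f (1 + m * k + i + 1) - f (1 + m * k + i) := by
        calc (m : ℝ) = ((m : ℤ) : ℝ) := by push_cast; ring
        _ ≤ ((g (1 + m * k + i) : ℤ) : ℝ) := by exact_mod_cast h1
        _ ≤ _ := h2
      have h4 : 1 + m * k + (i + 1) = 1 + m * k + i + 1 := by ring
      rw [h4]; push_cast; linarith
  have key3 : ∀ m : ℕ, f 1 + (k : ℝ) * ((m : ℝ) * ((m : ℝ) - 1)) / 2 ≤ f (1 + m * k) := by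
    intro m
    induction m with
    | zero => simp
    | succ m ih =>
      have h1 := key2 m k
      have h2 : 1 + (m + 1) * k = 1 + m * k + k := by ring
      rw [h2]; push_cast
      push_cast at ih
      nlinarith [h1, ih]
  -- bound on N(x)
  have hkR : (0:ℝ) < (k:ℝ) := by exact_mod_cast hk
  have Nbound : ∀ x : ℝ, 0 < x → f 0 ≤ x →
      ((Set.ncard {n : ℕ | f n ≤ x} : ℝ)) ^ 2 ≤ 4 * k * x + 2 * (1 + 3 * (k:ℝ)) ^ 2 := by
    intro x hx hfx
    set s : ℝ := Real.sqrt (2 * x / k) with hs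
    have hs0 : 0 ≤ s := Real.sqrt_nonneg _
    have hsq : s ^ 2 = 2 * x / k := Real.sq_sqrt (by positivity)
    set m : ℕ := ⌈s⌉₊ + 2 with hm
    have hm1 : s + 2 ≤ (m : ℝ) := by
      have := Nat.le_ceil s
      push_cast [hm]; linarith
    have hm2 : (m : ℝ) ≤ s + 3 := by
      have := Nat.ceil_lt_add_one hs0
      push_cast [hm]; linarith
    have hxlt : x < (k:ℝ) * ((m : ℝ) * ((m : ℝ) - 1)) / 2 := by
      have h2 : 2 * x = (k:ℝ) * s ^ 2 := by rw [hsq]; field_simp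
      have hprod : (s + 2) * (s + 1) ≤ (m:ℝ) * ((m:ℝ) - 1) := by nlinarith [hm1, hs0]
      nlinarith [hprod, h2, hkR, hs0]
    have hfbig : x < f (1 + m * k) := by
      have := key3 m
      have := hfpos 1
      linarith
    have hsub : {n : ℕ | f n ≤ x} ⊆ ↑(Finset.range (1 + m * k)) := by
      intro n hn
      simp only [Finset.coe_range, Set.mem_Iio]
      by_contra hge
      push_neg at hge
      have : f (1 + m * k) ≤ f n := hmono.monotone hge
      simp only [Set.mem_setOf_eq] at hn
      linarith
    have hcard : Set.ncard {n : ℕ | f n ≤ x} ≤ 1 + m * k := by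
      calc Set.ncard {n : ℕ | f n ≤ x} ≤ Set.ncard ↑(Finset.range (1 + m * k)) :=
            Set.ncard_le_ncard hsub (Finset.range _).finite_toSet
        _ = 1 + m * k := by rw [Set.ncard_coe_finset, Finset.card_range]
    have hcardR : (Set.ncard {n : ℕ | f n ≤ x} : ℝ) ≤ 1 + (m:ℝ) * k := by
      exact_mod_cast hcard
    have hNnn : (0:ℝ) ≤ (Set.ncard {n : ℕ | f n ≤ x} : ℝ) := by positivity
    have hup : (1 + (m:ℝ) * k) ≤ (1 + 3 * k) + k * s := by nlinarith [hm2, hkR]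
    have hks : (k:ℝ) ^ 2 * s ^ 2 = 2 * k * x := by
      rw [hsq]; field_simp
    nlinarith [hcardR, hNnn, hup, hks, hs0, hkR, sq_nonneg ((1 + 3*(k:ℝ)) - k * s)]
  -- conclude
  set M : ℝ := 4 * k + 2 * (1 + 3 * (k:ℝ)) ^ 2 / f 0 with hM
  obtain ⟨x, hx, hMx⟩ := hsup M
  have hf0 := hfpos 0
  have hMnn : 0 ≤ M := by positivity
  have hMx' : M * x < (Set.ncard {n : ℕ | f n ≤ x} : ℝ) ^ 2 := by
    rwa [lt_div_iff₀ hx] at hMx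
  by_cases hc : f 0 ≤ x
  · have hb := Nbound x hx hc
    have : 4 * (k:ℝ) * x + 2 * (1 + 3 * (k:ℝ)) ^ 2 ≤ M * x := by
      rw [hM]
      have : 2 * (1 + 3 * (k:ℝ)) ^ 2 ≤ 2 * (1 + 3 * (k:ℝ)) ^ 2 / f 0 * x := by
        rw [div_mul_eq_mul_div, le_div_iff₀ hf0]
        nlinarith [sq_nonneg (1 + 3*(k:ℝ))]
      ring_nf
      ring_nf at this
      linarith
    linarith
  · push_neg at hc
    have hempty : {n : ℕ | f n ≤ x} = ∅ := by
      ext n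
      simp only [Set.mem_setOf_eq, Set.mem_empty_iff_false, iff_false, not_le]
      calc x < f 0 := hc
        _ ≤ f n := hmono.monotone (Nat.zero_le n)
    rw [hempty] at hMx'
    simp at hMx'
    nlinarith [hMnn, hx]
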